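/- The correlation clustering index Δ(Y) is lower bounded by the maximum number of pairwise edge-disjoint bad cycles in (G,Y), and upper bounded by the total number of bad cycles in (G,Y). -/

import Mathlib

open scoped Classical

/-- Cost of a clustering `f` of the vertices. -/
noncomputable def clusterCost {V : Type*} [Fintype V] {β : Type*}
    (G : SimpleGraph V) (Y : Sym2 V → ℤ) (f : V → β) : ℕ :=
  (G.edgeFinset.filter fun e =>
    (Y e = -1 ∧ Sym2.lift ⟨fun u v => f u = f v, fun _ _ => propext eq_comm⟩ e) ∨
    (Y e = 1 ∧ ¬ Sym2.lift ⟨fun u v => f u = f v, fun _ _ => propext eq_comm⟩ e)).card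

/-- Correlation clustering index Δ(Y). -/
noncomputable def ccIndex {V : Type*} [Fintype V] (G : SimpleGraph V) (Y : Sym2 V → ℤ) : ℕ :=
  sInf {c | ∃ f : V → ℕ, clusterCost G Y f = c}

/-- A bad cycle: a simple cycle containing exactly one negative edge. -/
def IsBadCycle {V : Type*} (G : SimpleGraph V) (Y : Sym2 V → ℤ) {v : V}
    (c : G.Walk v v) : Prop :=
  c.IsCycle ∧ c.edges.countP (fun e => decide (Y e = -1)) = 1

/-- The edge sets of the bad cycles of `(G,Y)`. -/
noncomputable def badCycleSets {V : Type*} (G : SimpleGraph V) (Y : Sym2 V → ℤ) :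
    Set (Finset (Sym2 V)) :=
  {s | ∃ (v : V) (c : G.Walk v v), IsBadCycle G Y c ∧ s = c.edges.toFinset}

open SimpleGraph

/-- "same cluster" predicate on unordered pairs. -/
private def sameCl {V : Type*} {β : Type*} (f : V → β) : Sym2 V → Prop :=
  Sym2.lift ⟨fun u v => f u = f v, fun _ _ => propext eq_comm⟩

/-- Violation predicate for an edge under a clustering. -/
private def Viol {V : Type*} {β : Type*} (Y : Sym2 V → ℤ) (f : V → β) (e : Sym2 V) : Prop :=
  (Y e = -1 ∧ sameCl f e) ∨ (Y e = 1 ∧ ¬ sameCl f e)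

private lemma walk_parity {V : Type*} {β : Type*} {G : SimpleGraph V} (Y : Sym2 V → ℤ)
    (hY : ∀ e ∈ G.edgeSet, Y e = 1 ∨ Y e = -1) (f : V → β) {a b : V} (p : G.Walk a b)
    (hnv : ∀ e ∈ p.edges, ¬ Viol Y f e) :
    (p.edges.countP (fun e => decide (Y e = -1)) = 0 → f a = f b) ∧
    (p.edges.countP (fun e => decide (Y e = -1)) = 1 → f a ≠ f b) := by
  induction p with
  | nil => simp
  | @cons a c b h q ih =>
    have hnv' : ∀ e ∈ q.edges, ¬ Viol Y f e := fun e he => hnv e (by simp [he])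
    obtain ⟨ih0, ih1⟩ := ih hnv'
    have hne : ¬ Viol Y f s(a, c) := hnv _ (by simp)
    have hsame : sameCl f s(a,c) ↔ (f a = f c) := by simp [sameCl]
    rcases hY s(a,c) h with hpos | hneg
    · have hac : f a = f c := by
        by_contra hcon
        exact hne (Or.inr ⟨hpos, by rw [hsame]; exact hcon⟩)
      have hcount : (Walk.cons h q).edges.countP (fun e => decide (Y e = -1)) =
          q.edges.countP (fun e => decide (Y e = -1)) := by
        simp [Walk.edges_cons, List.countP_cons, hpos]
      constructor
      · intro h0; rw [hcount] at h0; exact hac.trans (ih0 h0)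
      · intro h1 hcon; rw [hcount] at h1; exact ih1 h1 (hac.symm.trans hcon)
    · have hac : f a ≠ f c := by
        intro hcon
        exact hne (Or.inl ⟨hneg, hsame.mpr hcon⟩)
      have hcount : (Walk.cons h q).edges.countP (fun e => decide (Y e = -1)) =
          q.edges.countP (fun e => decide (Y e = -1)) + 1 := by
        simp [Walk.edges_cons, List.countP_cons, hneg]
      constructor
      · intro h0; rw [hcount] at h0; omega
      · intro h1 hcon
        rw [hcount] at h1
        have : q.edges.countP (fun e => decide (Y e = -1)) = 0 := by omega
        exact hac (hcon.trans (ih0 this).symm)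

/-- Every bad cycle contains a violated edge, under any clustering. -/
private lemma badCycle_has_viol {V : Type*} {β : Type*} {G : SimpleGraph V} (Y : Sym2 V → ℤ)
    (hY : ∀ e ∈ G.edgeSet, Y e = 1 ∨ Y e = -1) (f : V → β) {v : V} {c : G.Walk v v}
    (hc : IsBadCycle G Y c) : ∃ e ∈ c.edges, Viol Y f e := by
  by_contra hcon
  push_neg at hcon
  exact (walk_parity Y hY f c hcon).2 hc.2 rfl

/-- Uniqueness of the negative edge of a bad cycle. -/
private lemma badCycle_neg_unique {V : Type*} {G : SimpleGraph V} (Y : Sym2 V → ℤ)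
    {v : V} {c : G.Walk v v} (h1 : c.edges.countP (fun e => decide (Y e = -1)) = 1)
    {e e' : Sym2 V} (he : e ∈ c.edges) (he' : e' ∈ c.edges)
    (hne : Y e = -1) (hne' : Y e' = -1) : e = e' := by
  rw [List.countP_eq_length_filter] at h1
  obtain ⟨x, hx⟩ := List.length_eq_one_iff.mp h1
  have h1' : e ∈ c.edges.filter (fun e => decide (Y e = -1)) := by
    simp [List.mem_filter, he, hne]
  have h2' : e' ∈ c.edges.filter (fun e => decide (Y e = -1)) := by
    simp [List.mem_filter, he', hne']
  rw [hx] at h1' h2'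
  simp at h1' h2'
  rw [h1', h2']

private lemma edges_mapLe {V : Type*} {Gp G : SimpleGraph V} (h : Gp ≤ G) {u v : V}
    (p : Gp.Walk u v) : (Walk.mapLe h p).edges = p.edges := by
  have hid : (Sym2.map ⇑(Hom.ofLE h)) = id := by
    funext e; induction e using Sym2.ind; rfl
  simp only [Walk.mapLe, Walk.edges_map, hid, List.map_id]

/-- Δ(Y) is at least the maximum number of pairwise edge-disjoint bad cycles and
at most the total number of bad cycles. -/
theorem stmt2 {V : Type*} [Fintype V] (G : SimpleGraph V) (Y : Sym2 V → ℤ)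
    (hY : ∀ e ∈ G.edgeSet, Y e = 1 ∨ Y e = -1) :
    (∀ D : Finset (Finset (Sym2 V)), ↑D ⊆ badCycleSets G Y →
      (∀ s ∈ D, ∀ t ∈ D, s ≠ t → Disjoint s t) → D.card ≤ ccIndex G Y) ∧
    ccIndex G Y ≤ (badCycleSets G Y).ncard := by
  constructor
  · -- lower bound
    intro D hD hdisj
    have key : ∀ f : V → ℕ, D.card ≤ clusterCost G Y f := by
      intro f
      set F := (G.edgeFinset.filter fun e =>
        (Y e = -1 ∧ Sym2.lift ⟨fun u v => f u = f v, fun _ _ => propext eq_comm⟩ e) ∨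
        (Y e = 1 ∧ ¬ Sym2.lift ⟨fun u v => f u = f v, fun _ _ => propext eq_comm⟩ e)) with hF
      have hsel : ∀ s ∈ D, ∃ e, e ∈ F ∧ e ∈ s := by
        intro s hs
        obtain ⟨v, c, hc, rfl⟩ := hD hs
        obtain ⟨e, heE, hev⟩ := badCycle_has_viol Y hY f hc
        refine ⟨e, ?_, by simpa using heE⟩
        rw [hF, Finset.mem_filter]
        exact ⟨SimpleGraph.mem_edgeFinset.mpr (c.edges_subset_edgeSet heE), hev⟩
      have hcard : D.attach.card ≤ F.card := by
        refine Finset.card_le_card_of_injOn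
          (fun s => (hsel s.1 s.2).choose) (fun s _ => (hsel s.1 s.2).choose_spec.1) ?_
        rintro ⟨s, hs⟩ - ⟨t, ht⟩ - heq
        dsimp only at heq
        by_contra hne
        have hne' : s ≠ t := fun h => hne (by simpa using h)
        have h1 := (hsel s hs).choose_spec.2
        have h2 := (hsel t ht).choose_spec.2
        rw [heq] at h1
        exact Finset.disjoint_left.mp (hdisj s hs t ht hne') h1 h2
      simpa [clusterCost] using (Finset.card_attach (s := D)) ▸ hcard
    exact le_csInf ⟨clusterCost G Y (fun _ => 0), fun _ => 0, rfl⟩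
      (by rintro c ⟨f, rfl⟩; exact key f)
  · -- upper bound
    set Gp : SimpleGraph V :=
      { Adj := fun u v => G.Adj u v ∧ Y s(u,v) = 1
        symm := by
          constructor
          rintro u v ⟨h1, h2⟩
          exact ⟨h1.symm, by rwa [Sym2.eq_swap]⟩
        loopless := ⟨fun v h => G.irrefl h.1⟩ } with hGp
    have hle : Gp ≤ G := fun _ _ h => h.1
    have hGpE : ∀ e ∈ Gp.edgeSet, Y e = 1 := by
      intro e he
      induction e using Sym2.ind with
      | _ u v => exact (Gp.mem_edgeSet.mp he).2
    obtain ⟨ι, hι⟩ := Countable.exists_injective_nat (Gp.ConnectedComponent)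
    set f : V → ℕ := fun v => ι (Gp.connectedComponentMk v) with hf
    have hfiff : ∀ u v : V, f u = f v ↔ Gp.Reachable u v := by
      intro u v
      rw [hf]
      constructor
      · intro h; exact (ConnectedComponent.eq).mp (hι h)
      · intro h; exact congrArg ι (ConnectedComponent.eq.mpr h)
    have hcc : ccIndex G Y ≤ clusterCost G Y f := Nat.sInf_le ⟨f, rfl⟩
    refine hcc.trans ?_
    -- count violated edges
    set F := (G.edgeFinset.filter fun e =>
      (Y e = -1 ∧ Sym2.lift ⟨fun u v => f u = f v, fun _ _ => propext eq_comm⟩ e) ∨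
      (Y e = 1 ∧ ¬ Sym2.lift ⟨fun u v => f u = f v, fun _ _ => propext eq_comm⟩ e)) with hFdef
    have hfin : (badCycleSets G Y).Finite := Set.toFinite _
    rw [Set.ncard_eq_toFinset_card _ hfin]
    show F.card ≤ hfin.toFinset.card
    -- each violated edge yields a bad cycle set containing it as its unique negative edge
    have hsel : ∀ e ∈ F, ∃ s, s ∈ badCycleSets G Y ∧ e ∈ s ∧ Y e = -1 ∧
        (∀ e' ∈ s, Y e' = -1 → e' = e) := by
      intro e heF
      rw [hFdef, Finset.mem_filter] at heF
      obtain ⟨heE, hviol⟩ := heF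
      induction e using Sym2.ind with
      | _ u v =>
        have hadj : G.Adj u v := SimpleGraph.mem_edgeFinset.mp heE
        rcases hviol with ⟨hneg, hsame⟩ | ⟨hpos, hdiff⟩
        · -- negative in-cluster edge: endpoints reachable in Gp
          have hreach : Gp.Reachable u v := (hfiff u v).mp (by simpa using hsame)
          obtain ⟨w⟩ := hreach
          set pp : Gp.Path u v := w.toPath with hpp
          set q : G.Walk v u := (Walk.mapLe hle pp.val).reverse with hq
          have hqpath : q.IsPath := (pp.2.mapLe hle).reverse
          have hqedges : ∀ e' ∈ q.edges, Y e' = 1 := by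
            intro e' he'
            rw [hq, Walk.edges_reverse, List.mem_reverse, edges_mapLe] at he'
            exact hGpE e' (pp.val.edges_subset_edgeSet he')
          have hnotmem : s(u, v) ∉ q.edges := by
            intro hmem
            have := hqedges _ hmem
            rw [hneg] at this; norm_num at this
          have hcyc : (Walk.cons hadj q).IsCycle :=
            SimpleGraph.Path.cons_isCycle ⟨q, hqpath⟩ hadj hnotmem
          have hcount : (Walk.cons hadj q).edges.countP
              (fun e => decide (Y e = -1)) = 1 := by
            rw [Walk.edges_cons, List.countP_cons]
            have h0 : q.edges.countP (fun e => decide (Y e = -1)) = 0 := by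
              rw [List.countP_eq_zero]
              intro e' he'
              simp [hqedges e' he']
            simp [h0, hneg]
          refine ⟨(Walk.cons hadj q).edges.toFinset, ⟨u, _, ⟨hcyc, hcount⟩, rfl⟩, ?_, hneg, ?_⟩
          · simp
          · intro e' he' hne'
            rw [List.mem_toFinset] at he'
            exact badCycle_neg_unique Y hcount he' (by simp) hne' hneg
        · -- positive cross-cluster edge: impossible
          exfalso
          have hreach : Gp.Reachable u v := SimpleGraph.Adj.reachable ⟨hadj, hpos⟩
          exact hdiff (by simp [(hfiff u v).mpr hreach])
    have hcard : F.attach.card ≤ hfin.toFinset.card := by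
      refine Finset.card_le_card_of_injOn (fun e => (hsel e.1 e.2).choose)
        (fun e _ => by
          simpa [Set.Finite.mem_toFinset] using (hsel e.1 e.2).choose_spec.1) ?_
      rintro ⟨e, he⟩ - ⟨e', he'⟩ - heq
      dsimp only at heq
      obtain ⟨-, hmem, hneg, huniq⟩ := (hsel e he).choose_spec
      obtain ⟨-, hmem', hneg', -⟩ := (hsel e' he').choose_spec
      rw [heq] at huniq
      exact Subtype.ext ((huniq e' hmem' hneg').symm)
    calc F.card = F.attach.card := (Finset.card_attach (s := F)).symm
      _ ≤ hfin.toFinset.card := hcard
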